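/- Let K be an admissible complete multipartite graph with parts of cardinalities a_1 ≤ a_2 ≤ ⋯ ≤ a_r, where r ≥ 2. If a_1 < a_2, then a_i = a_1 + 1 for all i = 2, …, r. If a_1 = a_2, then a_1 + a_2 + ⋯ + a_r ≤ r(a_1 + 1) − 2. -/

import Mathlib

open SimpleGraph
open Finset

set_option maxHeartbeats 1000000 in
theorem admissible_completeMultipartite_part_sizes
    (r : ℕ) (hr : 2 ≤ r) (V : Fin r → Type*)
    [∀ i, Fintype (V i)] [∀ i, DecidableEq (V i)] [∀ i, Nonempty (V i)]
    (hmono : Monotone fun i => Fintype.card (V i))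
    (n m : ℕ) (hn : n = Fintype.card (Σ i, V i))
    (hm : m = (completeMultipartiteGraph V).edgeFinset.card)
    (hdvd : (n - 1) ∣ m)
    (hmax : (completeMultipartiteGraph V).maxDegree ≤ 2 * m / (n - 1)) :
    (Fintype.card (V ⟨0, by omega⟩) < Fintype.card (V ⟨1, by omega⟩) →
      ∀ i : Fin r, i ≠ ⟨0, by omega⟩ →
        Fintype.card (V i) = Fintype.card (V ⟨0, by omega⟩) + 1) ∧
    (Fintype.card (V ⟨0, by omega⟩) = Fintype.card (V ⟨1, by omega⟩) →
      ∑ i, Fintype.card (V i) ≤ r * (Fintype.card (V ⟨0, by omega⟩) + 1) - 2) := by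
  set a : Fin r → ℕ := fun i => Fintype.card (V i) with ha
  set i0 : Fin r := ⟨0, by omega⟩ with hi0
  set i1 : Fin r := ⟨1, by omega⟩ with hi1
  have hpos : ∀ i, 1 ≤ a i := fun i => Fintype.card_pos
  have hfib : ∀ i : Fin r, (univ.filter fun y : Σ j, V j => y.1 = i).card = a i := by
    intro i
    rw [Finset.card_filter, ← Finset.univ_sigma_univ, Finset.sum_sigma]
    simp [apply_ite, Finset.sum_ite_eq', ha]
  have hnsum : n = ∑ i, a i := by rw [hn, Fintype.card_sigma]
  have hain : ∀ i, a i ≤ n := by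
    intro i
    rw [hnsum]
    exact Finset.single_le_sum (fun j _ => Nat.zero_le _) (Finset.mem_univ i)
  have hn2 : 2 ≤ n := by
    calc 2 ≤ r := hr
    _ = ∑ _i : Fin r, 1 := by simp
    _ ≤ ∑ i, a i := Finset.sum_le_sum fun i _ => hpos i
    _ = n := hnsum.symm
  have hdeg : ∀ x : Σ i, V i, (completeMultipartiteGraph V).degree x = n - a x.1 := by
    intro x
    have h1 : (completeMultipartiteGraph V).neighborFinset x
        = univ.filter fun y : Σ j, V j => ¬ (y.1 = x.1) := by
      ext y
      simp [SimpleGraph.mem_neighborFinset, ne_comm, eq_comm]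
    rw [SimpleGraph.degree, h1, Finset.filter_not, Finset.card_sdiff_of_subset (Finset.filter_subset _ _),
      hfib, hn, ← Finset.card_univ]
  have h2m : 2 * m = ∑ i, a i * (n - a i) := by
    rw [hm, ← SimpleGraph.sum_degrees_eq_twice_card_edges, ← Finset.univ_sigma_univ,
      Finset.sum_sigma]
    simp [hdeg, mul_comm]
    rfl
  -- key inequality in ℕ
  have hmm : (n - a i0) * (n - 1) ≤ 2 * m := by
    have hv : (completeMultipartiteGraph V).degree ⟨i0, Classical.arbitrary (V i0)⟩ = n - a i0 :=
      hdeg _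
    have h1 : n - a i0 ≤ 2 * m / (n - 1) :=
      hv ▸ le_trans (SimpleGraph.degree_le_maxDegree _ _) hmax
    calc (n - a i0) * (n - 1) ≤ 2 * m / (n - 1) * (n - 1) := Nat.mul_le_mul_right _ h1
    _ = 2 * m := Nat.div_mul_cancel ((hdvd.mul_left 2))
  -- move to ℤ
  have hnZ : (n : ℤ) = ∑ i, (a i : ℤ) := by exact_mod_cast hnsum
  have h2mZ : (2 * m : ℤ) = (n : ℤ) * ∑ i, (a i : ℤ) - ∑ i, (a i : ℤ) ^ 2 := by
    have h' : ((2 * m : ℕ) : ℤ) = ∑ i, (a i : ℤ) * ((n : ℤ) - a i) := by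
      rw [h2m, Nat.cast_sum]
      exact Finset.sum_congr rfl fun i _ => by
        rw [Nat.cast_mul, Nat.cast_sub (hain i)]
    push_cast at h'
    rw [h', Finset.mul_sum, ← Finset.sum_sub_distrib]
    exact Finset.sum_congr rfl fun i _ => by ring
  have hmmZ : ((n : ℤ) - a i0) * ((n : ℤ) - 1) ≤ 2 * m := by
    have h' := hmm
    zify [hain i0, show 1 ≤ n by omega] at h'
    exact h'
  have hkey : ∑ i, ((a i : ℤ) ^ 2 - ((a i0 : ℤ) + 1) * a i) ≤ -(a i0 : ℤ) := by
    rw [Finset.sum_sub_distrib, ← Finset.mul_sum, ← hnZ]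
    nlinarith [hmmZ, h2mZ]
  set A : ℤ := (a i0 : ℤ) with hA
  set d : Fin r → ℤ := fun i => (a i : ℤ) - A - 1 with hd
  set S : ℤ := ∑ i, d i with hS
  set Q : ℤ := ∑ i, (d i) ^ 2 with hQ
  have hmain : (A + 1) * S + Q ≤ -A := by
    have h' : (A + 1) * S + Q = ∑ i, ((a i : ℤ) ^ 2 - (A + 1) * a i) := by
      rw [hS, hQ, Finset.mul_sum, ← Finset.sum_add_distrib]
      exact Finset.sum_congr rfl fun i _ => by simp only [hd]; ring
    rw [h']
    exact hkey
  have hd0 : d i0 = -1 := by simp [hd, hA]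
  have hA1 : 1 ≤ A := by rw [hA]; exact_mod_cast hpos i0
  have hne01 : i0 ≠ i1 := by simp [hi0, hi1, Fin.ext_iff]
  constructor
  · -- strict case
    intro hlt i hi
    change a i0 < a i1 at hlt
    change i ≠ i0 at hi
    show a i = a i0 + 1
    have hi1le : ∀ j : Fin r, j ≠ i0 → 0 ≤ d j := by
      intro j hj
      have hj' : (1 : ℕ) ≤ (j : ℕ) := by
        have : (j : ℕ) ≠ 0 := by
          intro h0
          exact hj (by rw [hi0]; exact Fin.ext h0)
        omega
      have h1j : a i1 ≤ a j := hmono (show i1 ≤ j by rw [Fin.le_def]; exact hj')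
      simp only [hd, hA]
      omega
    have hSsplit : S = -1 + ∑ j ∈ univ.erase i0, d j := by
      rw [hS, ← Finset.add_sum_erase _ _ (Finset.mem_univ i0), hd0]
    have hQsplit : Q = 1 + ∑ j ∈ univ.erase i0, (d j) ^ 2 := by
      rw [hQ, ← Finset.add_sum_erase _ _ (Finset.mem_univ i0), hd0]
      norm_num
    set T : ℤ := ∑ j ∈ univ.erase i0, d j with hT
    set Q' : ℤ := ∑ j ∈ univ.erase i0, (d j) ^ 2 with hQ'
    have hTnn : 0 ≤ T :=
      Finset.sum_nonneg fun j hj => hi1le j (Finset.ne_of_mem_erase hj)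
    have hQ'nn : 0 ≤ Q' := Finset.sum_nonneg fun j _ => sq_nonneg _
    have hT0 : (A + 1) * T + Q' ≤ 0 := by
      rw [hSsplit, hQsplit] at hmain; nlinarith
    have hdi : d i ≤ T := by
      refine Finset.single_le_sum (fun j hj => hi1le j (Finset.ne_of_mem_erase hj)) ?_
      exact Finset.mem_erase.mpr ⟨hi, Finset.mem_univ i⟩
    have hdi0 : d i = 0 := by nlinarith [hi1le i hi]
    have hfin : (a i : ℤ) = A + 1 := by simp only [hd] at hdi0; omega
    rw [hA] at hfin
    exact_mod_cast hfin
  · -- equal case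
    intro heq
    change a i0 = a i1 at heq
    show ∑ i, a i ≤ r * (a i0 + 1) - 2
    have hd1 : d i1 = -1 := by simp only [hd, hA]; omega
    have hQ2 : 2 ≤ Q := by
      have hle : ∑ j ∈ ({i0, i1} : Finset (Fin r)), (d j) ^ 2 ≤ Q :=
        Finset.sum_le_sum_of_subset_of_nonneg (Finset.subset_univ _) fun j _ _ => sq_nonneg _
      rw [Finset.sum_pair hne01, hd0, hd1] at hle
      norm_num at hle
      linarith
    have hS2 : S ≤ -2 := by nlinarith
    have hsumZ : (∑ i, (a i : ℤ)) = r * (A + 1) + S := by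
      rw [hS, show ((r : ℤ) * (A + 1)) = ∑ _i : Fin r, (A + 1) by
        rw [Finset.sum_const, Finset.card_univ, Fintype.card_fin]; ring,
        ← Finset.sum_add_distrib]
      exact Finset.sum_congr rfl fun i _ => by simp only [hd]; ring
    have hfinal : (∑ i, (a i : ℤ)) + 2 ≤ r * (A + 1) := by omega
    rw [hA] at hfinal
    have hfin : (∑ i, a i) + 2 ≤ r * (a i0 + 1) := by exact_mod_cast hfinal
    omega
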